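/- Let I be an ideal of a Noetherian ring with free presentation R^m →^φ R^n → I → 0, Z_1 = ker(R^n → I) the syzygy module, B_1 ⊂ Z_1 the submodule of Koszul syzygies, and δ(I) = (Z_1 ∩ I·R^n)/B_1. Then δ(I) ≅ L_2/(S_1·L_1), where L is the defining ideal of the Rees algebra in S = R[T_1,...,T_n] and L_i its degree-i component. -/

import Mathlib

open MvPolynomial

/-- The defining ideal `L` of the Rees algebra of the ideal generated by `a`,
via `T_i ↦ a_i t`. -/
noncomputable def reesIdeal {R : Type} [CommRing R] {m : ℕ} (a : Fin m → R) :
    Ideal (MvPolynomial (Fin m) R) :=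
  RingHom.ker (MvPolynomial.aeval (fun i => Polynomial.C (a i) * Polynomial.X) :
    MvPolynomial (Fin m) R →ₐ[R] Polynomial R).toRingHom

/-- The ideal `(L_1)` generated by the degree one part of the Rees ideal,
i.e. the defining ideal of the symmetric algebra. -/
noncomputable def symIdeal {R : Type} [CommRing R] {m : ℕ} (a : Fin m → R) :
    Ideal (MvPolynomial (Fin m) R) :=
  Ideal.span {g | g ∈ reesIdeal a ∧ g.IsHomogeneous 1}

/-- The module of syzygies `Z₁` of the tuple `a`. -/
def syzMod {R : Type} [CommRing R] {m : ℕ} (a : Fin m → R) : Submodule R (Fin m → R) where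
  carrier := {z | ∑ i, z i * a i = 0}
  add_mem' := by
    intro x y hx hy
    simp only [Set.mem_setOf_eq, Pi.add_apply, add_mul, Finset.sum_add_distrib] at *
    simp [hx, hy]
  zero_mem' := by simp
  smul_mem' := by
    intro c x hx
    simp only [Set.mem_setOf_eq, Pi.smul_apply, smul_eq_mul, mul_assoc] at *
    rw [← Finset.mul_sum, hx, mul_zero]

/-- The submodule `B₁ ⊆ Z₁` of Koszul syzygies of the tuple `a`. -/
def koszMod {R : Type} [CommRing R] {m : ℕ} (a : Fin m → R) : Submodule R (Fin m → R) :=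
  Submodule.span R {z : Fin m → R |
    ∃ i j, z = a j • (Pi.single i 1 : Fin m → R) - a i • (Pi.single j 1 : Fin m → R)}

namespace SyzAux

variable {R : Type} [CommRing R] {n : ℕ}

noncomputable def E (i j : Fin n) : Fin n →₀ ℕ := Finsupp.single i 1 + Finsupp.single j 1

lemma E_comm (i j : Fin n) : E i j = E j i := add_comm _ _

lemma weight_one_single (i : Fin n) (k : ℕ) :
    Finsupp.weight (1 : Fin n → ℕ) (Finsupp.single i k) = k := by
  rw [Finsupp.weight_apply, Finsupp.sum_single_index] <;> simp

lemma degree_E (i j : Fin n) : (E i j).degree = 2 := by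
  simp [E, map_add, Finsupp.degree_single]

lemma toMultiset_E (i j : Fin n) : Finsupp.toMultiset (E i j) = {i, j} := by
  simp only [E, Finsupp.toMultiset_add, Finsupp.toMultiset_single, one_smul]
  rfl

lemma E_inj {i j k l : Fin n} (hij : i ≤ j) (hkl : k ≤ l) (h : E i j = E k l) :
    i = k ∧ j = l := by
  have h' : ({i, j} : Multiset (Fin n)) = {k, l} := by
    rw [← toMultiset_E, ← toMultiset_E, h]
  rw [show ({i, j} : Multiset (Fin n)) = i ::ₘ {j} from rfl,
      show ({k, l} : Multiset (Fin n)) = k ::ₘ {l} from rfl,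
      Multiset.cons_eq_cons] at h'
  rcases h' with ⟨h1, h2⟩ | ⟨hne, cs, h1, h2⟩
  · exact ⟨h1, Multiset.singleton_inj.mp h2⟩
  · have hcs : cs = 0 := by
      have hc := congrArg Multiset.card h1
      simp only [Multiset.card_singleton, Multiset.card_cons] at hc
      rw [← Multiset.card_eq_zero]
      omega
    subst hcs
    have h1' : j = k := by
      have := h1
      rw [show (k ::ₘ 0 : Multiset (Fin n)) = {k} from rfl] at this
      exact Multiset.singleton_inj.mp this
    have h2' : l = i := by
      have := h2
      rw [show (i ::ₘ 0 : Multiset (Fin n)) = {i} from rfl] at this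
      exact Multiset.singleton_inj.mp this
    exact ⟨le_antisymm (le_of_le_of_eq hij h1') (le_of_le_of_eq hkl h2'),
           le_antisymm (le_of_eq_of_le h1' hkl) (le_of_eq_of_le h2' hij)⟩

lemma exists_of_degree_one {d : Fin n →₀ ℕ} (hd : d.degree = 1) :
    ∃ i, d = Finsupp.single i 1 := by
  classical
  have hcard : d.support.card = 1 := by
    have hle : d.support.card ≤ 1 := by
      calc d.support.card = ∑ i ∈ d.support, 1 := by simp
        _ ≤ ∑ i ∈ d.support, d i :=
            Finset.sum_le_sum fun i hi =>
              Nat.one_le_iff_ne_zero.2 (Finsupp.mem_support_iff.1 hi)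
        _ = 1 := hd
    have hne : d.support.card ≠ 0 := by
      intro h
      rw [Finset.card_eq_zero] at h
      rw [Finsupp.degree_apply] at hd
      simp [h] at hd
    omega
  obtain ⟨i, hi⟩ := Finset.card_eq_one.1 hcard
  obtain ⟨-, hd'⟩ := Finsupp.support_eq_singleton.1 hi
  have : d i = 1 := by
    rw [Finsupp.degree_apply, hi, Finset.sum_singleton] at hd
    exact hd
  exact ⟨i, by rw [hd', this]⟩

lemma exists_of_degree_two {d : Fin n →₀ ℕ} (hd : d.degree = 2) :
    ∃ i j, i ≤ j ∧ d = E i j := by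
  classical
  have hpos : ∀ i ∈ d.support, 1 ≤ d i := fun i hi =>
    Nat.one_le_iff_ne_zero.2 (Finsupp.mem_support_iff.1 hi)
  have hle : d.support.card ≤ 2 := by
    calc d.support.card = ∑ i ∈ d.support, 1 := by simp
      _ ≤ ∑ i ∈ d.support, d i := Finset.sum_le_sum hpos
      _ = 2 := hd
  have hne : d.support.card ≠ 0 := by
    intro h
    rw [Finset.card_eq_zero] at h
    rw [Finsupp.degree_apply] at hd
    simp [h] at hd
  have h12 : d.support.card = 1 ∨ d.support.card = 2 := by omega
  rcases h12 with hc | hc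
  · obtain ⟨i, hi⟩ := Finset.card_eq_one.1 hc
    obtain ⟨-, hd'⟩ := Finsupp.support_eq_singleton.1 hi
    have h2 : d i = 2 := by
      rw [Finsupp.degree_apply, hi, Finset.sum_singleton] at hd
      exact hd
    refine ⟨i, i, le_refl i, ?_⟩
    rw [hd', h2, E]
    exact (Finsupp.single_add i 1 1)
  · obtain ⟨i, j, hij, hs⟩ := Finset.card_eq_two.1 hc
    have hsum : d i + d j = 2 := by
      rw [Finsupp.degree_apply, hs, Finset.sum_pair hij] at hd
      exact hd
    have hi1 : d i = 1 := by
      have := hpos i (by rw [hs]; simp)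
      have := hpos j (by rw [hs]; simp)
      omega
    have hj1 : d j = 1 := by omega
    have hdE : d = E i j := by
      ext x
      by_cases hx : x = i
      · subst hx
        simp [E, Finsupp.single_apply, hi1, Ne.symm hij]
      · by_cases hy : x = j
        · subst hy
          simp [E, Finsupp.single_apply, hj1, hij]
        · have : x ∉ d.support := by rw [hs]; simp [hx, hy]
          rw [Finsupp.notMem_support_iff.1 this]
          simp [E, Finsupp.single_apply, Ne.symm hx, Ne.symm hy]
    rcases le_total i j with h | h
    · exact ⟨i, j, h, hdE⟩
    · exact ⟨j, i, h, by rw [hdE, E_comm]⟩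

variable (a : Fin n → R)

open Classical in
/-- coefficient-extraction map `F ↦ (i ↦ ∑_{j ≥ i} coeff(T_iT_j, F) * a_j)`. -/
noncomputable def phi : MvPolynomial (Fin n) R →ₗ[R] (Fin n → R) where
  toFun F := fun i => ∑ j, (if i ≤ j then coeff (E i j) F else 0) * a j
  map_add' F G := by
    funext i
    dsimp only [Pi.add_apply]
    rw [← Finset.sum_add_distrib]
    refine Finset.sum_congr rfl fun j _ => ?_
    split_ifs with h
    · rw [coeff_add, add_mul]
    · simp
  map_smul' r F := by
    funext i
    simp only [RingHom.id_apply, Pi.smul_apply, smul_eq_mul, Finset.mul_sum]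
    refine Finset.sum_congr rfl fun j _ => ?_
    split_ifs with h
    · rw [coeff_smul, smul_eq_mul, mul_assoc]
    · simp

lemma phi_apply (F : MvPolynomial (Fin n) R) (i : Fin n) :
    phi a F i = ∑ j, (if i ≤ j then coeff (E i j) F else 0) * a j := rfl

open Classical in
lemma phi_monomial {i j : Fin n} (hij : i ≤ j) (r : R) :
    phi a (monomial (E i j) r) = Pi.single i (r * a j) := by
  funext k
  rw [phi_apply, Pi.single_apply]
  by_cases hk : k = i
  · subst hk
    rw [if_pos rfl]
    rw [Finset.sum_eq_single j]
    · rw [if_pos hij, coeff_monomial, if_pos rfl]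
    · intro b _ hb
      split_ifs with h
      · rw [coeff_monomial]
        rw [if_neg, zero_mul]
        intro hE
        exact hb (E_inj hij h hE).2.symm
      · exact zero_mul _
    · intro h; exact absurd (Finset.mem_univ j) h
  · rw [if_neg hk]
    refine Finset.sum_eq_zero fun b _ => ?_
    split_ifs with h
    · rw [coeff_monomial, if_neg, zero_mul]
      intro hE
      exact hk (E_inj hij h hE).1.symm
    · exact zero_mul _

lemma X_mul_X (i j : Fin n) :
    (X i : MvPolynomial (Fin n) R) * X j = monomial (E i j) 1 := by
  rw [X, X, monomial_mul, one_mul]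
  rfl

lemma single_smul (i : Fin n) (r : R) :
    Pi.single i r = r • (Pi.single i 1 : Fin n → R) := by
  funext x
  rw [Pi.smul_apply, Pi.single_apply, Pi.single_apply, smul_eq_mul]
  split_ifs <;> simp

lemma phi_XX (i j : Fin n) :
    phi a ((X i : MvPolynomial (Fin n) R) * X j)
      = if i ≤ j then a j • (Pi.single i 1 : Fin n → R) else a i • (Pi.single j 1 : Fin n → R) := by
  rcases le_total i j with h | h
  · rw [if_pos h, X_mul_X, phi_monomial a h, one_mul, single_smul]
  · by_cases h' : i ≤ j
    · rw [if_pos h', X_mul_X, phi_monomial a h', one_mul, single_smul]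
    · rw [if_neg h', X_mul_X, E_comm, phi_monomial a h, one_mul, single_smul]

open Classical in
lemma decomp_one {s : MvPolynomial (Fin n) R} (hs : s.IsHomogeneous 1) :
    s = ∑ k, coeff (Finsupp.single k 1) s • X k := by
  apply MvPolynomial.ext
  intro d
  rw [coeff_sum]
  simp only [coeff_smul, coeff_X', smul_eq_mul]
  by_cases hd : d.degree = 1
  · obtain ⟨k0, rfl⟩ := exists_of_degree_one hd
    rw [Finset.sum_eq_single k0]
    · rw [if_pos rfl, mul_one]
    · intro b _ hb
      rw [if_neg, mul_zero]
      intro hE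
      exact hb (by
        have := (Finsupp.single_left_inj (one_ne_zero)).1 hE
        exact this)
    · intro h; exact absurd (Finset.mem_univ k0) h
  · rw [hs.coeff_eq_zero hd]
    refine (Finset.sum_eq_zero fun b _ => ?_).symm
    rw [if_neg, mul_zero]
    intro hE
    apply hd
    rw [← hE]
    simp [Finsupp.degree_apply, Finsupp.support_single_ne_zero]

open Classical in
lemma decomp_two {F : MvPolynomial (Fin n) R} (hF : F.IsHomogeneous 2) :
    F = ∑ i, ∑ j, (if i ≤ j then coeff (E i j) F else 0) • (X i * X j) := by
  apply MvPolynomial.ext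
  intro d
  rw [coeff_sum]
  simp only [coeff_sum, coeff_smul, X_mul_X (R := R), coeff_monomial, smul_eq_mul]
  by_cases hd : d.degree = 2
  · obtain ⟨i0, j0, hij0, rfl⟩ := exists_of_degree_two hd
    rw [Finset.sum_eq_single i0]
    · rw [Finset.sum_eq_single j0]
      · rw [if_pos hij0, if_pos rfl, mul_one]
      · intro b _ hb
        split_ifs with h1 h2
        · exact absurd (E_inj h1 hij0 h2).2 hb
        · exact mul_zero _
        · exact zero_mul _
        · exact zero_mul _
      · intro h; exact absurd (Finset.mem_univ j0) h
    · intro b _ hb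
      refine Finset.sum_eq_zero fun c _ => ?_
      split_ifs with h1 h2
      · exact absurd (E_inj h1 hij0 h2).1 hb
      · exact mul_zero _
      · exact zero_mul _
      · exact zero_mul _
    · intro h; exact absurd (Finset.mem_univ i0) h
  · rw [hF.coeff_eq_zero hd]
    refine (Finset.sum_eq_zero fun i _ => Finset.sum_eq_zero fun j _ => ?_).symm
    split_ifs with h1 h2
    · exact absurd (h2 ▸ degree_E i j) hd
    · exact mul_zero _
    · exact zero_mul _
    · exact zero_mul _

/-- The evaluation point for the Rees algebra. -/
noncomputable abbrev theta : Fin n → Polynomial R := fun i => Polynomial.C (a i) * Polynomial.X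

lemma mem_rees_iff (F : MvPolynomial (Fin n) R) :
    F ∈ reesIdeal a ↔ aeval (theta a) F = 0 := Iff.rfl

lemma aeval_sum_two (c : Fin n → Fin n → R) :
    aeval (theta a) (∑ i, ∑ j, c i j • ((X i : MvPolynomial (Fin n) R) * X j))
      = Polynomial.C (∑ i, ∑ j, c i j * (a i * a j)) * Polynomial.X ^ 2 := by
  rw [map_sum, map_sum (Polynomial.C : R →+* Polynomial R), Finset.sum_mul]
  refine Finset.sum_congr rfl fun i _ => ?_
  rw [map_sum, map_sum (Polynomial.C : R →+* Polynomial R), Finset.sum_mul]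
  refine Finset.sum_congr rfl fun j _ => ?_
  rw [map_smul, map_mul, aeval_X, aeval_X]
  rw [Polynomial.smul_eq_C_mul, map_mul, map_mul]
  ring

lemma aeval_sum_one (h : Fin n → R) :
    aeval (theta a) (∑ j, h j • (X j : MvPolynomial (Fin n) R))
      = Polynomial.C (∑ j, h j * a j) * Polynomial.X := by
  rw [map_sum, map_sum (Polynomial.C : R →+* Polynomial R), Finset.sum_mul]
  refine Finset.sum_congr rfl fun j _ => ?_
  rw [map_smul, aeval_X, Polynomial.smul_eq_C_mul, map_mul]
  ring

lemma CX_eq_zero {s : R} {k : ℕ} (h : Polynomial.C s * Polynomial.X ^ k = 0) : s = 0 := by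
  have := congrArg (fun p => Polynomial.coeff p k) h
  simpa [Polynomial.coeff_C_mul, Polynomial.coeff_X_pow] using this

open Classical in
lemma key_two {F : MvPolynomial (Fin n) R} (hF : F ∈ reesIdeal a)
    (h2 : F.IsHomogeneous 2) :
    ∑ i, ∑ j, (if i ≤ j then coeff (E i j) F else 0) * (a i * a j) = 0 := by
  have h0 : aeval (theta a) F = 0 := hF
  rw [decomp_two h2, aeval_sum_two] at h0
  exact CX_eq_zero (by rw [← pow_one Polynomial.X] at h0 ⊢; exact h0)

open Classical in
lemma key_one {q : MvPolynomial (Fin n) R} (hq : q ∈ reesIdeal a)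
    (h1 : q.IsHomogeneous 1) :
    ∑ j, coeff (Finsupp.single j 1) q * a j = 0 := by
  have h0 : aeval (theta a) q = 0 := hq
  rw [decomp_one h1, aeval_sum_one] at h0
  exact CX_eq_zero (k := 1) (by rw [pow_one]; exact h0)

lemma mem_rees_of_two (c : Fin n → Fin n → R)
    (hc : ∑ i, ∑ j, c i j * (a i * a j) = 0) :
    (∑ i, ∑ j, c i j • ((X i : MvPolynomial (Fin n) R) * X j)) ∈ reesIdeal a := by
  rw [mem_rees_iff, aeval_sum_two, hc]
  simp

lemma mem_rees_of_one (h : Fin n → R) (hh : ∑ j, h j * a j = 0) :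
    (∑ j, h j • (X j : MvPolynomial (Fin n) R)) ∈ reesIdeal a := by
  rw [mem_rees_iff, aeval_sum_one, hh]
  simp

lemma homog_two (c : Fin n → Fin n → R) :
    (∑ i, ∑ j, c i j • ((X i : MvPolynomial (Fin n) R) * X j)).IsHomogeneous 2 := by
  refine IsHomogeneous.sum _ _ _ fun i _ => IsHomogeneous.sum _ _ _ fun j _ => ?_
  have : ((X i : MvPolynomial (Fin n) R) * X j).IsHomogeneous 2 :=
    (isHomogeneous_X R i).mul (isHomogeneous_X R j)
  exact (homogeneousSubmodule (Fin n) R 2).smul_mem _ this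

lemma homog_one (h : Fin n → R) :
    (∑ j, h j • (X j : MvPolynomial (Fin n) R)).IsHomogeneous 1 := by
  refine IsHomogeneous.sum _ _ _ fun j _ => ?_
  exact (homogeneousSubmodule (Fin n) R 1).smul_mem _ (isHomogeneous_X R j)

lemma kosz_gen (i j : Fin n) :
    a j • (Pi.single i 1 : Fin n → R) - a i • (Pi.single j 1 : Fin n → R) ∈ koszMod a :=
  Submodule.subset_span ⟨i, j, rfl⟩

lemma mem_smul_top_iff (I : Ideal R) (z : Fin n → R) :
    z ∈ I • (⊤ : Submodule R (Fin n → R)) ↔ ∀ i, z i ∈ I := by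
  constructor
  · intro hz i
    refine Submodule.smul_induction_on hz ?_ ?_
    · intro r hr m _
      simpa using I.mul_mem_right (m i) hr
    · intro x y hx hy
      simpa using I.add_mem hx hy
  · intro h
    have hz : z = ∑ i, z i • (Pi.single i 1 : Fin n → R) := by
      conv_lhs => rw [← Finset.univ_sum_single z]
      exact Finset.sum_congr rfl fun i _ => single_smul i (z i)
    rw [hz]
    exact Submodule.sum_mem _ fun i _ =>
      Submodule.smul_mem_smul (h i) Submodule.mem_top

/-- membership in `koszMod` gives a coefficient function. -/
lemma kosz_rep {z : Fin n → R} (hz : z ∈ koszMod a) :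
    ∃ d : Fin n × Fin n → R, ∀ i, z i = ∑ j, (d (i, j) - d (j, i)) * a j := by
  classical
  have hset : {w : Fin n → R |
      ∃ i j, w = a j • (Pi.single i 1 : Fin n → R) - a i • (Pi.single j 1 : Fin n → R)}
      = Set.range (fun p : Fin n × Fin n =>
          a p.2 • (Pi.single p.1 1 : Fin n → R) - a p.1 • (Pi.single p.2 1 : Fin n → R)) := by
    ext w
    constructor
    · rintro ⟨i, j, rfl⟩; exact ⟨(i, j), rfl⟩
    · rintro ⟨⟨i, j⟩, rfl⟩; exact ⟨i, j, rfl⟩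
  rw [koszMod, hset] at hz
  obtain ⟨d, hd⟩ := (Submodule.mem_span_range_iff_exists_fun R).1 hz
  refine ⟨d, fun i => ?_⟩
  rw [← congrFun hd i, Finset.sum_apply, Fintype.sum_prod_type]
  simp only [Pi.smul_apply, Pi.sub_apply, Pi.single_apply, smul_eq_mul, mul_sub,
    mul_ite, mul_one, mul_zero, Finset.sum_sub_distrib, sub_mul,
    Finset.sum_ite_eq, Finset.sum_ite_eq', Finset.mem_univ, if_true]
  congr 1
  rw [Finset.sum_comm]
  simp [Finset.sum_ite_eq', Finset.sum_ite_eq]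

open Classical in
lemma phi_mem {F : MvPolynomial (Fin n) R} (hF : F ∈ reesIdeal a)
    (h2 : F.IsHomogeneous 2) :
    phi a F ∈ syzMod a ⊓ (Ideal.span (Set.range a) • (⊤ : Submodule R (Fin n → R))) := by
  refine Submodule.mem_inf.2 ⟨?_, ?_⟩
  · show ∑ i, phi a F i * a i = 0
    calc ∑ i, phi a F i * a i
        = ∑ i, ∑ j, (if i ≤ j then coeff (E i j) F else 0) * (a i * a j) := by
          refine Finset.sum_congr rfl fun i _ => ?_
          rw [phi_apply, Finset.sum_mul]
          exact Finset.sum_congr rfl fun j _ => by ring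
      _ = 0 := key_two a hF h2
  · rw [mem_smul_top_iff]
    intro i
    rw [phi_apply]
    refine Ideal.sum_mem _ fun j _ => Ideal.mul_mem_left _ _ ?_
    exact Ideal.subset_span ⟨j, rfl⟩

open Classical in
lemma phi_K {F : MvPolynomial (Fin n) R}
    (hF : F ∈ (MvPolynomial.homogeneousSubmodule (Fin n) R 1 *
            ((reesIdeal a).restrictScalars R ⊓
              MvPolynomial.homogeneousSubmodule (Fin n) R 1))) :
    phi a F ∈ koszMod a := by
  refine Submodule.mul_induction_on hF ?_ ?_
  · intro p hp q hq
    obtain ⟨hq1, hq2⟩ := Submodule.mem_inf.1 hq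
    have hq2' : q.IsHomogeneous 1 := hq2
    have hsyz : ∑ j, coeff (Finsupp.single j 1) q * a j = 0 := key_one a hq1 hq2'
    have hphiXk : ∀ k, phi a ((X k) * q) ∈ koszMod a := by
      intro k
      have hq' : (X k : MvPolynomial (Fin n) R) * q
          = ∑ j, coeff (Finsupp.single j 1) q • (X k * X j) := by
        conv_lhs => rw [decomp_one hq2']
        rw [Finset.mul_sum]
        exact Finset.sum_congr rfl fun j _ => (mul_smul_comm _ _ _)
      have hterm : ∀ j, phi a (coeff (Finsupp.single j 1) q • ((X k : MvPolynomial (Fin n) R) * X j))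
          = (coeff (Finsupp.single j 1) q * a j) • (Pi.single k 1 : Fin n → R)
            + (if k ≤ j then 0 else coeff (Finsupp.single j 1) q •
                (a k • (Pi.single j 1 : Fin n → R) - a j • (Pi.single k 1 : Fin n → R))) := by
        intro j
        rw [map_smul, phi_XX]
        split_ifs with hkj
        · rw [add_zero, smul_smul]
        · rw [smul_sub, smul_smul, smul_smul]
          abel
      rw [hq', map_sum, Finset.sum_congr rfl fun j _ => hterm j, Finset.sum_add_distrib]
      refine Submodule.add_mem _ ?_ (Submodule.sum_mem _ fun j _ => ?_)
      · rw [← Finset.sum_smul, hsyz, zero_smul]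
        exact Submodule.zero_mem _
      · split_ifs with hkj
        · exact Submodule.zero_mem _
        · exact Submodule.smul_mem _ _ (kosz_gen a j k)
    have hpq : p * q = ∑ k, coeff (Finsupp.single k 1) p • ((X k : MvPolynomial (Fin n) R) * q) := by
      conv_lhs => rw [decomp_one hp]
      rw [Finset.sum_mul]
      exact Finset.sum_congr rfl fun k _ => smul_mul_assoc _ _ _
    rw [hpq, map_sum]
    exact Submodule.sum_mem _ fun k _ => by
      rw [map_smul]; exact Submodule.smul_mem _ _ (hphiXk k)
  · intro x y hx hy
    rw [map_add]
    exact Submodule.add_mem _ hx hy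

open Classical in
lemma exists_preimage {z : Fin n → R}
    (hz : z ∈ syzMod a ⊓ (Ideal.span (Set.range a) • (⊤ : Submodule R (Fin n → R)))) :
    ∃ F, (F ∈ reesIdeal a ∧ F.IsHomogeneous 2) ∧ phi a F - z ∈ koszMod a := by
  obtain ⟨hz1, hz2⟩ := Submodule.mem_inf.1 hz
  have hzi : ∀ i, ∃ c : Fin n → R, ∑ j, c j • a j = z i := fun i =>
    (Submodule.mem_span_range_iff_exists_fun R).1 ((mem_smul_top_iff _ z).1 hz2 i)
  choose c hc using hzi
  have hc' : ∀ i, ∑ j, c i j * a j = z i := by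
    intro i; rw [← hc i]; rfl
  refine ⟨∑ i, ∑ j, c i j • ((X i : MvPolynomial (Fin n) R) * X j),
    ⟨?_, homog_two _⟩, ?_⟩
  · apply mem_rees_of_two
    have h1 : ∀ i, ∑ j, c i j * (a i * a j) = z i * a i := by
      intro i
      rw [← hc' i, Finset.sum_mul]
      exact Finset.sum_congr rfl fun j _ => by ring
    rw [Finset.sum_congr rfl fun i _ => h1 i]
    exact hz1
  · have hphi : phi a (∑ i, ∑ j, c i j • ((X i : MvPolynomial (Fin n) R) * X j))
        = ∑ i, ∑ j, c i j • (if i ≤ j then a j • (Pi.single i 1 : Fin n → R)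
            else a i • (Pi.single j 1 : Fin n → R)) := by
      rw [map_sum]
      refine Finset.sum_congr rfl fun i _ => ?_
      rw [map_sum]
      refine Finset.sum_congr rfl fun j _ => ?_
      rw [map_smul, phi_XX]
    have hzdec : z = ∑ i, ∑ j, (c i j * a j) • (Pi.single i 1 : Fin n → R) := by
      conv_lhs => rw [← Finset.univ_sum_single z]
      refine Finset.sum_congr rfl fun i _ => ?_
      rw [← hc' i, single_smul, Finset.sum_smul]
    rw [hphi, hzdec, ← Finset.sum_sub_distrib]
    refine Submodule.sum_mem _ fun i _ => ?_
    rw [← Finset.sum_sub_distrib]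
    refine Submodule.sum_mem _ fun j _ => ?_
    split_ifs with hij
    · rw [smul_smul, sub_self]
      exact Submodule.zero_mem _
    · have : c i j • (a i • (Pi.single j 1 : Fin n → R)) - (c i j * a j) • (Pi.single i 1 : Fin n → R)
          = c i j • (a i • (Pi.single j 1 : Fin n → R) - a j • (Pi.single i 1 : Fin n → R)) := by
        rw [smul_sub, smul_smul, smul_smul]
      rw [this]
      exact Submodule.smul_mem _ _ (kosz_gen a j i)

open Classical in
lemma mem_K_of {F : MvPolynomial (Fin n) R} (hF : F ∈ reesIdeal a)
    (h2 : F.IsHomogeneous 2) (hk : phi a F ∈ koszMod a) :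
    F ∈ (MvPolynomial.homogeneousSubmodule (Fin n) R 1 *
            ((reesIdeal a).restrictScalars R ⊓
              MvPolynomial.homogeneousSubmodule (Fin n) R 1)) := by
  obtain ⟨d, hd⟩ := kosz_rep a hk
  have hgsyz : ∀ i, ∑ j,
      ((if i ≤ j then coeff (E i j) F else 0) - (d (i, j) - d (j, i))) * a j = 0 := by
    intro i
    simp only [sub_mul]
    rw [Finset.sum_sub_distrib, sub_eq_zero, ← phi_apply, hd i]
    exact Finset.sum_congr rfl fun j _ => by rw [sub_mul]
  have hH : ∀ i, (∑ j, ((if i ≤ j then coeff (E i j) F else 0) - (d (i, j) - d (j, i)))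
      • (X j : MvPolynomial (Fin n) R)) ∈ reesIdeal a :=
    fun i => mem_rees_of_one a _ (hgsyz i)
  have e3 : ∑ i, ∑ j, ((d (i, j) - d (j, i)) : R) • ((X i : MvPolynomial (Fin n) R) * X j) = 0 := by
    have hswap : ∑ i, ∑ j, (d (j, i) : R) • ((X i : MvPolynomial (Fin n) R) * X j)
        = ∑ i, ∑ j, (d (i, j) : R) • ((X i : MvPolynomial (Fin n) R) * X j) := by
      rw [Finset.sum_comm]
      exact Finset.sum_congr rfl fun i _ => Finset.sum_congr rfl fun j _ => by
        rw [mul_comm]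
    calc ∑ i, ∑ j, ((d (i, j) - d (j, i)) : R) • ((X i : MvPolynomial (Fin n) R) * X j)
        = (∑ i, ∑ j, (d (i, j) : R) • ((X i : MvPolynomial (Fin n) R) * X j))
          - ∑ i, ∑ j, (d (j, i) : R) • ((X i : MvPolynomial (Fin n) R) * X j) := by
          rw [← Finset.sum_sub_distrib]
          refine Finset.sum_congr rfl fun i _ => ?_
          rw [← Finset.sum_sub_distrib]
          exact Finset.sum_congr rfl fun j _ => by rw [sub_smul]
      _ = 0 := by rw [hswap, sub_self]
  have hFeq : F = ∑ i, (X i : MvPolynomial (Fin n) R) *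
      (∑ j, ((if i ≤ j then coeff (E i j) F else 0) - (d (i, j) - d (j, i))) • X j) := by
    have e1 : ∀ i, (X i : MvPolynomial (Fin n) R) *
        (∑ j, ((if i ≤ j then coeff (E i j) F else 0) - (d (i, j) - d (j, i))) • X j)
        = ∑ j, ((if i ≤ j then coeff (E i j) F else 0) - (d (i, j) - d (j, i)))
            • ((X i : MvPolynomial (Fin n) R) * X j) := by
      intro i
      rw [Finset.mul_sum]
      exact Finset.sum_congr rfl fun j _ => mul_smul_comm _ _ _
    rw [Finset.sum_congr rfl fun i _ => e1 i]
    have e2 : ∑ i, ∑ j, ((if i ≤ j then coeff (E i j) F else 0) - (d (i, j) - d (j, i)))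
            • ((X i : MvPolynomial (Fin n) R) * X j)
        = (∑ i, ∑ j, (if i ≤ j then coeff (E i j) F else 0) • ((X i : MvPolynomial (Fin n) R) * X j))
          - ∑ i, ∑ j, ((d (i, j) - d (j, i)) : R) • ((X i : MvPolynomial (Fin n) R) * X j) := by
      rw [← Finset.sum_sub_distrib]
      refine Finset.sum_congr rfl fun i _ => ?_
      rw [← Finset.sum_sub_distrib]
      exact Finset.sum_congr rfl fun j _ => by rw [sub_smul]
    rw [e2, e3, sub_zero]
    exact decomp_two h2
  rw [hFeq]
  exact Submodule.sum_mem _ fun i _ =>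
    Submodule.mul_mem_mul (isHomogeneous_X R i)
      (Submodule.mem_inf.2 ⟨hH i, (mem_homogeneousSubmodule _ _).2 (homog_one _)⟩)

end SyzAux

open SyzAux in
/-- **The syzygetic lemma.**  For an ideal `I = (a_1, …, a_n)` of a Noetherian ring,
`δ(I) = (Z_1 ∩ I·Rⁿ)/B_1 ≅ L_2/(S_1·L_1)`, where `L` is the defining ideal of the Rees
algebra in `S = R[T_1, …, T_n]`. -/
theorem syzygetic_lemma {R : Type} [CommRing R] [IsNoetherianRing R]
    (n : ℕ) (a : Fin n → R) (I : Ideal R) (hI : I = Ideal.span (Set.range a)) :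
    Nonempty (
      ↥(Submodule.map (koszMod a).mkQ
          (syzMod a ⊓ (I • (⊤ : Submodule R (Fin n → R)))))
      ≃ₗ[R]
      ↥(Submodule.map
          ((MvPolynomial.homogeneousSubmodule (Fin n) R 1 *
            ((reesIdeal a).restrictScalars R ⊓
              MvPolynomial.homogeneousSubmodule (Fin n) R 1)).mkQ)
          ((reesIdeal a).restrictScalars R ⊓
            MvPolynomial.homogeneousSubmodule (Fin n) R 2))) := by
  classical
  subst hI
  set M := syzMod a ⊓ (Ideal.span (Set.range a) • (⊤ : Submodule R (Fin n → R))) with hM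
  set K := MvPolynomial.homogeneousSubmodule (Fin n) R 1 *
      ((reesIdeal a).restrictScalars R ⊓ MvPolynomial.homogeneousSubmodule (Fin n) R 1) with hK
  set L2 := (reesIdeal a).restrictScalars R ⊓ MvPolynomial.homogeneousSubmodule (Fin n) R 2
    with hL2
  let ρ₁ : ↥M →ₗ[R] ((Fin n → R) ⧸ koszMod a) := (koszMod a).mkQ.comp M.subtype
  let ρ₂ : ↥L2 →ₗ[R] (MvPolynomial (Fin n) R ⧸ K) := K.mkQ.comp L2.subtype
  have hr1 : LinearMap.range ρ₁ = Submodule.map (koszMod a).mkQ M := by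
    rw [LinearMap.range_comp, Submodule.range_subtype]
  have hr2 : LinearMap.range ρ₂ = Submodule.map K.mkQ L2 := by
    rw [LinearMap.range_comp, Submodule.range_subtype]
  have hmem : ∀ F : ↥L2, phi a (F : MvPolynomial (Fin n) R) ∈ M := by
    intro F
    have h := Submodule.mem_inf.1 F.2
    exact phi_mem a h.1 h.2
  let g : ↥L2 →ₗ[R] ↥M := LinearMap.codRestrict M ((phi a).comp L2.subtype) hmem
  have hker : LinearMap.ker ρ₂ ≤ (LinearMap.ker ρ₁).comap g := by
    intro F hF
    have hFK : (F : MvPolynomial (Fin n) R) ∈ K := by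
      have h0 : K.mkQ (F : MvPolynomial (Fin n) R) = 0 := hF
      rwa [Submodule.mkQ_apply, Submodule.Quotient.mk_eq_zero] at h0
    have : phi a (F : MvPolynomial (Fin n) R) ∈ koszMod a := phi_K a hFK
    show ρ₁ (g F) = 0
    show (koszMod a).mkQ (phi a (F : MvPolynomial (Fin n) R)) = 0
    rwa [Submodule.mkQ_apply, Submodule.Quotient.mk_eq_zero]
  let G : (↥L2 ⧸ LinearMap.ker ρ₂) →ₗ[R] (↥M ⧸ LinearMap.ker ρ₁) :=
    Submodule.mapQ _ _ g hker
  have hGbij : Function.Bijective G := by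
    constructor
    · apply LinearMap.ker_eq_bot.1
      rw [eq_bot_iff]
      rintro x hx
      obtain ⟨F, rfl⟩ := Submodule.Quotient.mk_surjective _ x
      have hx' : Submodule.Quotient.mk (g F) = (0 : ↥M ⧸ LinearMap.ker ρ₁) := by
        rw [← Submodule.mapQ_apply _ _ g (h := hker) F]
        exact hx
      have h1 : g F ∈ LinearMap.ker ρ₁ := (Submodule.Quotient.mk_eq_zero _).1 hx'
      have h2 : phi a (F : MvPolynomial (Fin n) R) ∈ koszMod a := by
        have h0 : (koszMod a).mkQ (phi a (F : MvPolynomial (Fin n) R)) = 0 := h1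
        rwa [Submodule.mkQ_apply, Submodule.Quotient.mk_eq_zero] at h0
      have hinf := Submodule.mem_inf.1 F.2
      have hFK : (F : MvPolynomial (Fin n) R) ∈ K := mem_K_of a hinf.1 hinf.2 h2
      rw [Submodule.mem_bot, Submodule.Quotient.mk_eq_zero]
      show ρ₂ F = 0
      show K.mkQ (F : MvPolynomial (Fin n) R) = 0
      rwa [Submodule.mkQ_apply, Submodule.Quotient.mk_eq_zero]
    · intro y
      obtain ⟨zM, rfl⟩ := Submodule.Quotient.mk_surjective _ y
      obtain ⟨F, hF, hk⟩ := exists_preimage a zM.2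
      refine ⟨Submodule.Quotient.mk (⟨F, Submodule.mem_inf.2 ⟨hF.1, hF.2⟩⟩ : ↥L2), ?_⟩
      rw [Submodule.mapQ_apply, Submodule.Quotient.eq]
      
      show ρ₁ _ = 0
      rw [map_sub]
      show (koszMod a).mkQ (phi a F) - (koszMod a).mkQ (zM : Fin n → R) = 0
      rw [← map_sub, Submodule.mkQ_apply, Submodule.Quotient.mk_eq_zero]
      exact hk
  exact ⟨(LinearEquiv.ofEq _ _ hr1.symm).trans
    (ρ₁.quotKerEquivRange.symm.trans
      (((LinearEquiv.ofBijective G hGbij).symm).trans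
        (ρ₂.quotKerEquivRange.trans (LinearEquiv.ofEq _ _ hr2))))⟩
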